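/- arXiv:2311.17759 — 2 statements merged into one kernel-verified Lean document; each statement's English description precedes it below -/
import Mathlib

section
/- Let X be a set, f : X → X a bijection, h : X → ℝ a function, and α > 1 a real number such that |h(f(x)) − α h(x)| ≤ C for all x ∈ X and some constant C ≥ 0. Then for each x ∈ X the limit ĥ(x) := lim_{m→∞} h(f^m(x)) / α^m exists, satisfies |ĥ(x) − h(x)| ≤ C/(α − 1), and satisfies ĥ(f(x)) = α ĥ(x). -/
open Filter Topology

/-- Call–Silverman telescoping construction of the canonical height. -/
theorem canonical_height_exists
    {X : Type*} (f : X → X) (hf : Function.Bijective f)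
    (h : X → ℝ) (α : ℝ) (hα : 1 < α) (C : ℝ) (hC : 0 ≤ C)
    (hquasi : ∀ x, |h (f x) - α * h x| ≤ C) :
    ∃ hhat : X → ℝ,
      (∀ x, Tendsto (fun m : ℕ => h (f^[m] x) / α ^ m) atTop (𝓝 (hhat x))) ∧
      (∀ x, |hhat x - h x| ≤ C / (α - 1)) ∧
      (∀ x, hhat (f x) = α * hhat x) := by
  have hα0 : (0 : ℝ) < α := lt_trans one_pos hα
  set g : X → ℕ → ℝ := fun x m => h (f^[m] x) / α ^ m with hg
  set u : X → ℕ → ℝ := fun x m => g x (m + 1) - g x m with hu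
  set r : ℝ := 1 / α with hr
  have hr0 : 0 ≤ r := by positivity
  have hr1 : r < 1 := by rw [hr, div_lt_one hα0]; exact hα
  have hub : ∀ x m, |u x m| ≤ C * r ^ (m + 1) := by
    intro x m
    have hpow : (0 : ℝ) < α ^ (m + 1) := pow_pos hα0 _
    have heq : u x m = (h (f^[m + 1] x) - α * h (f^[m] x)) / α ^ (m + 1) := by
      simp only [hu, hg]
      rw [pow_succ]
      field_simp
    rw [heq, abs_div, abs_of_pos hpow, div_le_iff₀ hpow]
    calc |h (f^[m + 1] x) - α * h (f^[m] x)| ≤ C := by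
          rw [Function.iterate_succ_apply']; exact hquasi _
      _ = C * r ^ (m + 1) * α ^ (m + 1) := by
          rw [hr, div_pow, one_pow, mul_assoc, div_mul_cancel₀ _ (ne_of_gt hpow)]
          ring
  have hgeom : Summable (fun m : ℕ => C * r ^ (m + 1)) :=
    ((summable_geometric_of_lt_one hr0 hr1).mul_left C).comp_injective
      (add_left_injective 1)
  have hsumm : ∀ x, Summable (u x) := fun x =>
    Summable.of_norm_bounded hgeom (fun m => hub x m)
  set hhat : X → ℝ := fun x => h x + ∑' m, u x m with hhat_def
  have htend : ∀ x, Tendsto (fun m : ℕ => h (f^[m] x) / α ^ m) atTop (𝓝 (hhat x)) := by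
    intro x
    have hs := (hsumm x).hasSum.tendsto_sum_nat
    have key : ∀ n, ∑ i ∈ Finset.range n, u x i = g x n - h x := by
      intro n
      rw [Finset.sum_range_sub (g x)]
      simp [hg]
    have h2 := hs.add_const (h x)
    simp only [key, sub_add_cancel] at h2
    have : hhat x = ∑' m, u x m + h x := by rw [hhat_def]; ring
    rw [this]
    exact h2
  refine ⟨hhat, htend, ?_, ?_⟩
  · intro x
    have h1 : |hhat x - h x| = ‖∑' m, u x m‖ := by
      rw [Real.norm_eq_abs]; congr 1; simp only [hhat_def]; ring
    rw [h1]
    calc ‖∑' m, u x m‖ ≤ ∑' m, C * r ^ (m + 1) :=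
          tsum_of_norm_bounded hgeom.hasSum (fun m => hub x m)
      _ = C / (α - 1) := by
          have heq2 : (∑' m : ℕ, C * r ^ (m + 1)) = C * r * ∑' m : ℕ, r ^ m := by
            rw [← tsum_mul_left]
            congr 1 with m
            rw [pow_succ]; ring
          rw [heq2, tsum_geometric_of_lt_one hr0 hr1, hr]
          have hα1 : α - 1 ≠ 0 := by linarith
          field_simp
  · intro x
    have h1 : Tendsto (fun m : ℕ => h (f^[m] (f x)) / α ^ m) atTop (𝓝 (hhat (f x))) :=
      htend (f x)
    have h2 : Tendsto (fun m : ℕ => α * (h (f^[m + 1] x) / α ^ (m + 1))) atTop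
        (𝓝 (α * hhat x)) :=
      (((htend x).comp (tendsto_add_atTop_nat 1)).const_mul α)
    have heq3 : (fun m : ℕ => α * (h (f^[m + 1] x) / α ^ (m + 1))) =
        fun m : ℕ => h (f^[m] (f x)) / α ^ m := by
      funext m
      rw [Function.iterate_succ_apply, pow_succ]
      have : α ^ m ≠ 0 := ne_of_gt (pow_pos hα0 m)
      field_simp
    rw [heq3] at h2
    exact tendsto_nhds_unique h1 h2
end

section
/- Let X be a set, g₁,…,g_n commuting bijections of X, and ĥ₁,…,ĥ_n : X → ℝ functions with positive reals χ_j(g_i) such that ĥ_j(g_i(x)) = χ_j(g_i) ĥ_j(x) for all i, j, x, where χ_i(g_i) > 1 and χ_j(g_i) < 1 for j ≠ i. Suppose there is a constant C with ∑_{j=1}^n ĥ_j(y) ≥ −C for all y in the (forward and backward) orbit of a point x under the group generated by g₁,…,g_n. Then ĥ_i(x) ≥ 0 for every i. -/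
/-- Nonnegativity of the canonical heights at points whose orbit under the group generated
by the commuting automorphisms `g i` has the sum of heights bounded below. -/
theorem canonical_heights_nonneg_on_orbit
    {X : Type*} {n : ℕ} (g : Fin n → Equiv.Perm X)
    (hcomm : ∀ i j, Commute (g i) (g j))
    (hhat : Fin n → X → ℝ) (c : Fin n → Fin n → ℝ)
    (hcpos : ∀ i j, 0 < c i j)
    (hdiag : ∀ i, 1 < c i i)
    (hoff : ∀ i j, j ≠ i → c i j < 1)
    (hscale : ∀ (i j : Fin n) (y : X), hhat j (g i y) = c i j * hhat j y)
    (x : X) (C : ℝ)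
    (hbound : ∀ y ∈ MulAction.orbit (Subgroup.closure (Set.range g)) x,
      -C ≤ ∑ j, hhat j y) :
    ∀ i, 0 ≤ hhat i x := by
  intro i
  -- iterated scaling
  have hiter : ∀ (m : ℕ) (j : Fin n), hhat j ((g i ^ m) x) = (c i j) ^ m * hhat j x := by
    intro m j
    induction m with
    | zero => simp
    | succ m ih =>
      have : (g i ^ (m + 1)) x = g i ((g i ^ m) x) := by
        rw [pow_succ']; rfl
      rw [this, hscale, ih, pow_succ']
      ring
  -- orbit membership
  have hmem : ∀ m : ℕ, (g i ^ m) x ∈ MulAction.orbit (Subgroup.closure (Set.range g)) x := by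
    intro m
    have hg : g i ∈ Subgroup.closure (Set.range g) :=
      Subgroup.subset_closure ⟨i, rfl⟩
    exact ⟨⟨g i ^ m, pow_mem hg m⟩, rfl⟩
  have key : ∀ m : ℕ, -C / (c i i) ^ m ≤ ∑ j, (c i j / c i i) ^ m * hhat j x := by
    intro m
    have h1 : -C ≤ ∑ j, (c i j) ^ m * hhat j x := by
      have := hbound _ (hmem m)
      simpa [hiter m] using this
    have hpos : (0:ℝ) < (c i i) ^ m := pow_pos (hcpos i i) m
    calc -C / (c i i) ^ m ≤ (∑ j, (c i j) ^ m * hhat j x) / (c i i) ^ m :=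
          div_le_div_of_nonneg_right h1 hpos.le |>.trans_eq rfl
      _ = ∑ j, (c i j / c i i) ^ m * hhat j x := by
          rw [Finset.sum_div]
          refine Finset.sum_congr rfl fun j _ => ?_
          rw [div_pow]
          ring
  -- limits
  have hL : Filter.Tendsto (fun m : ℕ => -C / (c i i) ^ m) Filter.atTop (nhds 0) := by
    have : Filter.Tendsto (fun m : ℕ => (c i i) ^ m) Filter.atTop Filter.atTop :=
      tendsto_pow_atTop_atTop_of_one_lt (hdiag i)
    simpa [div_eq_mul_inv] using (this.inv_tendsto_atTop).const_mul (-C)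
  have hR : Filter.Tendsto (fun m : ℕ => ∑ j, (c i j / c i i) ^ m * hhat j x)
      Filter.atTop (nhds (hhat i x)) := by
    have hs : Filter.Tendsto (fun m : ℕ => ∑ j, (c i j / c i i) ^ m * hhat j x)
        Filter.atTop (nhds (∑ j, (if j = i then hhat i x else 0))) := by
      refine tendsto_finset_sum _ fun j _ => ?_
      by_cases hj : j = i
      · rw [hj]
        simpa [div_self (hcpos i i).ne'] using
          (tendsto_const_nhds : Filter.Tendsto (fun _ : ℕ => hhat i x) Filter.atTop _)
      · simp only [if_neg hj]
        have h0 : (0:ℝ) ≤ c i j / c i i := le_of_lt (div_pos (hcpos i j) (hcpos i i))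
        have h1 : c i j / c i i < 1 := by
          rw [div_lt_one (hcpos i i)]
          exact (hoff i j hj).trans (hdiag i)
        have := tendsto_pow_atTop_nhds_zero_of_lt_one h0 h1
        simpa using this.mul_const (hhat j x)
    simpa [Finset.sum_ite_eq'] using hs
  have := le_of_tendsto_of_tendsto' hL hR key
  exact this
end
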